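/- Suppose 1/n ≪ μ ≪ ε ≪ p, d, 1/Δ. Let G be a lower (ε,d)-regular bipartite graph between V and V' with εn ≤ |V|,|V'| ≤ 2n, and let c : E(G) → {S ⊆ C : |S| = Δ} be a μn-bounded edge set colouring. Choose a random subset C' ⊆ C by including each colour independently with probability p. Then with probability at least 1 − e^{−μ^{−0.9} n}, the subgraph G_{C'} consisting of edges e with c(e) ⊆ C' is lower (2ε, p^Δ d)-regular. -/

import Mathlib

set_option linter.unusedSectionVars false

open Finset

namespace Stmt8Aux

variable {C : Type*} [DecidableEq C]

noncomputable def Ex (p : ℝ) (U : Finset C) (f : Finset C → ℝ) : ℝ :=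
  ∑ S ∈ U.powerset, p ^ S.card * (1 - p) ^ (U.card - S.card) * f S

lemma Ex_empty (p : ℝ) (f : Finset C → ℝ) : Ex p ∅ f = f ∅ := by
  simp [Ex]

lemma Ex_congr {p : ℝ} {U : Finset C} {f g : Finset C → ℝ}
    (h : ∀ S ⊆ U, f S = g S) : Ex p U f = Ex p U g :=
  Finset.sum_congr rfl fun S hS => by rw [h S (Finset.mem_powerset.1 hS)]

lemma Ex_insert {p : ℝ} {γ : C} {U : Finset C} (hγ : γ ∉ U) (f : Finset C → ℝ) :
    Ex p (insert γ U) f = Ex p U (fun S => p * f (insert γ S) + (1 - p) * f S) := by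
  unfold Ex
  rw [Finset.powerset_insert, Finset.sum_union, Finset.sum_image]
  · rw [← Finset.sum_add_distrib]
    refine Finset.sum_congr rfl fun S hS => ?_
    have hSU : S ⊆ U := Finset.mem_powerset.1 hS
    have hγS : γ ∉ S := fun h => hγ (hSU h)
    have h1 : (insert γ S).card = S.card + 1 := Finset.card_insert_of_notMem hγS
    have h2 : (insert γ U).card = U.card + 1 := Finset.card_insert_of_notMem hγ
    have h3 : S.card ≤ U.card := Finset.card_le_card hSU
    rw [h1, h2, Nat.succ_sub_succ, Nat.succ_sub h3, pow_succ]
    ring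
  · intro S hS T hT hST
    have hγS : γ ∉ S := fun h => hγ (Finset.mem_powerset.1 hS h)
    have hγT : γ ∉ T := fun h => hγ (Finset.mem_powerset.1 hT h)
    have := congrArg (fun W => Finset.erase W γ) hST
    simpa [Finset.erase_insert hγS, Finset.erase_insert hγT] using this
  · rw [Finset.disjoint_right]
    rintro S hS hS'
    rcases Finset.mem_image.1 hS with ⟨T, hT, rfl⟩
    exact hγ (Finset.mem_powerset.1 hS' (Finset.mem_insert_self _ _))

lemma Ex_const (p : ℝ) (U : Finset C) (a : ℝ) : Ex p U (fun _ => a) = a := by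
  induction U using Finset.induction with
  | empty => simp [Ex]
  | insert γ V hγ ih =>
    rw [Ex_insert hγ]
    have : (fun (S : Finset C) => p * a + (1 - p) * a) = fun _ => a := by
      funext S; ring
    rw [this, ih]

lemma Ex_const_mul (p : ℝ) (U : Finset C) (a : ℝ) (f : Finset C → ℝ) :
    Ex p U (fun S => a * f S) = a * Ex p U f := by
  unfold Ex
  rw [Finset.mul_sum]
  exact Finset.sum_congr rfl fun S _ => by ring

lemma Ex_sum (p : ℝ) (U : Finset C) {ι : Type*} (E : Finset ι) (g : ι → Finset C → ℝ) :
    Ex p U (fun S => ∑ i ∈ E, g i S) = ∑ i ∈ E, Ex p U (g i) := by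
  unfold Ex
  simp_rw [Finset.mul_sum]
  exact Finset.sum_comm

lemma w_nonneg {p : ℝ} (hp0 : 0 ≤ p) (hp1 : p ≤ 1) (a b : ℕ) :
    0 ≤ p ^ a * (1 - p) ^ b :=
  mul_nonneg (pow_nonneg hp0 _) (pow_nonneg (by linarith) _)

lemma Ex_mono {p : ℝ} (hp0 : 0 ≤ p) (hp1 : p ≤ 1) {U : Finset C} {f g : Finset C → ℝ}
    (h : ∀ S ⊆ U, f S ≤ g S) : Ex p U f ≤ Ex p U g :=
  Finset.sum_le_sum fun S hS =>
    mul_le_mul_of_nonneg_left (h S (Finset.mem_powerset.1 hS)) (w_nonneg hp0 hp1 _ _)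

lemma Ex_indicator {p : ℝ} {U A : Finset C} (hA : A ⊆ U) :
    Ex p U (fun S => if A ⊆ S then (1 : ℝ) else 0) = p ^ A.card := by
  induction U using Finset.induction generalizing A with
  | empty =>
    rw [Finset.subset_empty.1 hA]
    simp [Ex]
  | insert γ V hγ ih =>
    rw [Ex_insert hγ]
    by_cases hγA : γ ∈ A
    · have hA' : A.erase γ ⊆ V := by
        intro x hx
        rcases Finset.mem_erase.1 hx with ⟨hxγ, hxA⟩
        rcases Finset.mem_insert.1 (hA hxA) with h | h
        · exact absurd h hxγ
        · exact h
      have key : Ex p V (fun S => p * (if A ⊆ insert γ S then (1:ℝ) else 0)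
            + (1 - p) * (if A ⊆ S then (1:ℝ) else 0))
          = Ex p V (fun S => p * (if A.erase γ ⊆ S then (1:ℝ) else 0)) := by
        refine Ex_congr fun S hS => ?_
        have hγS : γ ∉ S := fun h => hγ (hS h)
        have e1 : (A ⊆ insert γ S) ↔ (A.erase γ ⊆ S) := by
          constructor
          · intro h x hx
            rcases Finset.mem_erase.1 hx with ⟨hxγ, hxA⟩
            rcases Finset.mem_insert.1 (h hxA) with h' | h'
            · exact absurd h' hxγ
            · exact h'
          · intro h x hx
            by_cases hxγ : x = γ
            · exact hxγ ▸ Finset.mem_insert_self _ _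
            · exact Finset.mem_insert_of_mem (h (Finset.mem_erase.2 ⟨hxγ, hx⟩))
        have e2 : ¬ (A ⊆ S) := fun h => hγS (h hγA)
        rw [if_congr e1 rfl rfl, if_neg e2, mul_zero, add_zero]
      rw [key, Ex_const_mul, ih hA']
      have : A.card = (A.erase γ).card + 1 := by
        rw [Finset.card_erase_of_mem hγA]
        exact (Nat.succ_pred_eq_of_pos (Finset.card_pos.2 ⟨γ, hγA⟩)).symm
      rw [this, pow_succ]
      ring
    · have hAV : A ⊆ V := by
        intro x hx
        rcases Finset.mem_insert.1 (hA hx) with h | h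
        · exact absurd (h ▸ hx) hγA
        · exact h
      have key : Ex p V (fun S => p * (if A ⊆ insert γ S then (1:ℝ) else 0)
            + (1 - p) * (if A ⊆ S then (1:ℝ) else 0))
          = Ex p V (fun S => if A ⊆ S then (1:ℝ) else 0) := by
        refine Ex_congr fun S hS => ?_
        have e1 : (A ⊆ insert γ S) ↔ (A ⊆ S) := by
          constructor
          · intro h x hx
            rcases Finset.mem_insert.1 (h hx) with h' | h'
            · exact absurd (h' ▸ hx) hγA
            · exact h'
          · exact fun h => h.trans (Finset.subset_insert _ _)
        rw [if_congr e1 rfl rfl]; ring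
      rw [key, ih hAV]


lemma exp_quad {x : ℝ} (hx : |x| ≤ 1) : Real.exp x ≤ 1 + x + x ^ 2 := by
  have h := Real.exp_bound hx (by norm_num : 0 < 2)
  have h2 : ∑ m ∈ Finset.range 2, x ^ m / m.factorial = 1 + x := by
    simp [Finset.sum_range_succ]
  rw [h2, sq_abs] at h
  norm_num [Nat.factorial] at h
  have := abs_le.1 h
  nlinarith [sq_nonneg x]

lemma two_point {p y z cv L : ℝ} (hp0 : 0 ≤ p) (hp1 : p ≤ 1) (hc : 0 ≤ cv)
    (hy : |y| ≤ cv) (hz : |z| ≤ cv) (hmean : p * y + (1 - p) * z = 0)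
    (hL : |L| * cv ≤ 1) :
    p * Real.exp (L * y) + (1 - p) * Real.exp (L * z) ≤ Real.exp (L ^ 2 * cv ^ 2) := by
  have hLy : |L * y| ≤ 1 := by
    rw [abs_mul]
    calc |L| * |y| ≤ |L| * cv := by
          exact mul_le_mul_of_nonneg_left hy (abs_nonneg L)
      _ ≤ 1 := hL
  have hLz : |L * z| ≤ 1 := by
    rw [abs_mul]
    calc |L| * |z| ≤ |L| * cv := by
          exact mul_le_mul_of_nonneg_left hz (abs_nonneg L)
      _ ≤ 1 := hL
  have h1 := exp_quad hLy
  have h2 := exp_quad hLz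
  have hy2 : y ^ 2 ≤ cv ^ 2 := by
    rw [← sq_abs y]; exact pow_le_pow_left₀ (abs_nonneg y) hy 2
  have hz2 : z ^ 2 ≤ cv ^ 2 := by
    rw [← sq_abs z]; exact pow_le_pow_left₀ (abs_nonneg z) hz 2
  have key : p * Real.exp (L * y) + (1 - p) * Real.exp (L * z)
      ≤ 1 + L ^ 2 * cv ^ 2 := by
    have e1 : p * Real.exp (L * y) ≤ p * (1 + L * y + (L * y) ^ 2) :=
      mul_le_mul_of_nonneg_left h1 hp0
    have e2 : (1 - p) * Real.exp (L * z) ≤ (1 - p) * (1 + L * z + (L * z) ^ 2) :=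
      mul_le_mul_of_nonneg_left h2 (by linarith)
    have e3 : p * (L * y) ^ 2 ≤ p * (L ^ 2 * cv ^ 2) := by
      rw [mul_pow]
      exact mul_le_mul_of_nonneg_left (mul_le_mul_of_nonneg_left hy2 (sq_nonneg L)) hp0
    have e4 : (1 - p) * (L * z) ^ 2 ≤ (1 - p) * (L ^ 2 * cv ^ 2) := by
      rw [mul_pow]
      exact mul_le_mul_of_nonneg_left (mul_le_mul_of_nonneg_left hz2 (sq_nonneg L)) (by linarith)
    have h0 : p * (L * y) + (1 - p) * (L * z) = 0 := by
      have : p * (L * y) + (1 - p) * (L * z) = L * (p * y + (1 - p) * z) := by ring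
      rw [this, hmean, mul_zero]
    linarith [e1, e2, e3, e4]
  calc p * Real.exp (L * y) + (1 - p) * Real.exp (L * z) ≤ 1 + L ^ 2 * cv ^ 2 := key
    _ ≤ Real.exp (L ^ 2 * cv ^ 2) := by linarith [Real.add_one_le_exp (L ^ 2 * cv ^ 2)]

lemma mgf_le {p : ℝ} (hp0 : 0 ≤ p) (hp1 : p ≤ 1) (U : Finset C) (f : Finset C → ℝ)
    (cc : C → ℝ) (hcc : ∀ γ ∈ U, 0 ≤ cc γ)
    (hlip : ∀ γ ∈ U, ∀ S ⊆ U, γ ∉ S → |f (insert γ S) - f S| ≤ cc γ)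
    (L : ℝ) (hL : ∀ γ ∈ U, |L| * cc γ ≤ 1) :
    Ex p U (fun S => Real.exp (L * (f S - Ex p U f)))
      ≤ Real.exp (L ^ 2 * ∑ γ ∈ U, cc γ ^ 2) := by
  induction U using Finset.induction generalizing f with
  | empty =>
    rw [Ex_empty, Ex_empty]
    simp
  | insert γ V hγ ih =>
    set g : Finset C → ℝ := fun S => p * f (insert γ S) + (1 - p) * f S with hg
    have hm : Ex p (insert γ V) f = Ex p V g := Ex_insert hγ f
    set m : ℝ := Ex p (insert γ V) f with hmdef
    rw [Ex_insert hγ]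
    have step1 : Ex p V (fun S => p * Real.exp (L * (f (insert γ S) - m))
          + (1 - p) * Real.exp (L * (f S - m)))
        ≤ Ex p V (fun S => Real.exp (L ^ 2 * cc γ ^ 2) * Real.exp (L * (g S - m))) := by
      refine Ex_mono hp0 hp1 fun S hS => ?_
      have hγS : γ ∉ S := fun h => hγ (hS h)
      have hSU : S ⊆ insert γ V := hS.trans (Finset.subset_insert _ _)
      have hδ : |f (insert γ S) - f S| ≤ cc γ :=
        hlip γ (Finset.mem_insert_self _ _) S hSU hγS
      set δ : ℝ := f (insert γ S) - f S with hδdef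
      have hy : |(1 - p) * δ| ≤ cc γ := by
        rw [abs_mul, abs_of_nonneg (by linarith : (0:ℝ) ≤ 1 - p)]
        calc (1 - p) * |δ| ≤ 1 * |δ| := by
              exact mul_le_mul_of_nonneg_right (by linarith) (abs_nonneg δ)
          _ ≤ cc γ := by rw [one_mul]; exact hδ
      have hz : |-(p * δ)| ≤ cc γ := by
        rw [abs_neg, abs_mul, abs_of_nonneg hp0]
        calc p * |δ| ≤ 1 * |δ| := mul_le_mul_of_nonneg_right hp1 (abs_nonneg δ)
          _ ≤ cc γ := by rw [one_mul]; exact hδ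
      have hmean : p * ((1 - p) * δ) + (1 - p) * (-(p * δ)) = 0 := by ring
      have htp := two_point hp0 hp1 (hcc γ (Finset.mem_insert_self _ _)) hy hz hmean
        (hL γ (Finset.mem_insert_self _ _))
      have ea : f (insert γ S) - m = (g S - m) + (1 - p) * δ := by
        simp only [hg, hδdef]; ring
      have eb : f S - m = (g S - m) + (-(p * δ)) := by
        simp only [hg, hδdef]; ring
      rw [ea, eb, mul_add, mul_add, Real.exp_add, Real.exp_add]
      calc p * (Real.exp (L * (g S - m)) * Real.exp (L * ((1 - p) * δ)))
            + (1 - p) * (Real.exp (L * (g S - m)) * Real.exp (L * (-(p * δ))))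
          = Real.exp (L * (g S - m)) *
            (p * Real.exp (L * ((1 - p) * δ)) + (1 - p) * Real.exp (L * (-(p * δ)))) := by ring
        _ ≤ Real.exp (L * (g S - m)) * Real.exp (L ^ 2 * cc γ ^ 2) :=
            mul_le_mul_of_nonneg_left htp (Real.exp_nonneg _)
        _ = Real.exp (L ^ 2 * cc γ ^ 2) * Real.exp (L * (g S - m)) := by ring
    have hlipg : ∀ γ' ∈ V, ∀ S ⊆ V, γ' ∉ S → |g (insert γ' S) - g S| ≤ cc γ' := by
      intro γ' hγ' S hSV hγ'S
      have hne : γ' ≠ γ := fun h => hγ (h ▸ hγ')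
      have h1 : |f (insert γ' S) - f S| ≤ cc γ' :=
        hlip γ' (Finset.mem_insert_of_mem hγ') S (hSV.trans (Finset.subset_insert _ _)) hγ'S
      have h2 : |f (insert γ' (insert γ S)) - f (insert γ S)| ≤ cc γ' := by
        refine hlip γ' (Finset.mem_insert_of_mem hγ') (insert γ S) ?_ ?_
        · exact Finset.insert_subset_insert _ hSV
        · intro h
          rcases Finset.mem_insert.1 h with h' | h'
          · exact hne h'
          · exact hγ'S h'
      have e : g (insert γ' S) - g S
          = p * (f (insert γ' (insert γ S)) - f (insert γ S))
            + (1 - p) * (f (insert γ' S) - f S) := by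
        simp only [hg]
        rw [Finset.insert_comm]
        ring
      rw [e]
      calc |p * (f (insert γ' (insert γ S)) - f (insert γ S))
            + (1 - p) * (f (insert γ' S) - f S)|
          ≤ |p * (f (insert γ' (insert γ S)) - f (insert γ S))|
            + |(1 - p) * (f (insert γ' S) - f S)| := abs_add_le _ _
        _ = p * |f (insert γ' (insert γ S)) - f (insert γ S)|
            + (1 - p) * |f (insert γ' S) - f S| := by
              rw [abs_mul, abs_mul, abs_of_nonneg hp0, abs_of_nonneg (by linarith : (0:ℝ) ≤ 1 - p)]
        _ ≤ p * cc γ' + (1 - p) * cc γ' := by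
              have := mul_le_mul_of_nonneg_left h2 hp0
              have := mul_le_mul_of_nonneg_left h1 (by linarith : (0:ℝ) ≤ 1 - p)
              linarith
        _ = cc γ' := by ring
    have ihg := ih g (fun γ' hγ' => hcc γ' (Finset.mem_insert_of_mem hγ')) hlipg
      (fun γ' hγ' => hL γ' (Finset.mem_insert_of_mem hγ'))
    calc Ex p V (fun S => p * Real.exp (L * (f (insert γ S) - m))
          + (1 - p) * Real.exp (L * (f S - m)))
        ≤ Ex p V (fun S => Real.exp (L ^ 2 * cc γ ^ 2) * Real.exp (L * (g S - m))) := step1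
      _ = Real.exp (L ^ 2 * cc γ ^ 2) * Ex p V (fun S => Real.exp (L * (g S - Ex p V g))) := by
          rw [Ex_const_mul]
          congr 2
          funext S
          rw [← hm]
      _ ≤ Real.exp (L ^ 2 * cc γ ^ 2) * Real.exp (L ^ 2 * ∑ γ' ∈ V, cc γ' ^ 2) :=
          mul_le_mul_of_nonneg_left ihg (Real.exp_nonneg _)
      _ = Real.exp (L ^ 2 * ∑ γ' ∈ insert γ V, cc γ' ^ 2) := by
          rw [← Real.exp_add, Finset.sum_insert hγ]
          ring_nf

lemma tail {p : ℝ} (hp0 : 0 ≤ p) (hp1 : p ≤ 1) (U : Finset C) (f : Finset C → ℝ)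
    (cc : C → ℝ) (hcc : ∀ γ ∈ U, 0 ≤ cc γ)
    (hlip : ∀ γ ∈ U, ∀ S ⊆ U, γ ∉ S → |f (insert γ S) - f S| ≤ cc γ)
    {t L : ℝ} (hL0 : 0 ≤ L) (hL1 : ∀ γ ∈ U, L * cc γ ≤ 1) :
    ∑ S ∈ U.powerset, (if f S ≤ Ex p U f - t then p ^ S.card * (1 - p) ^ (U.card - S.card) else 0)
      ≤ Real.exp (-(L * t) + L ^ 2 * ∑ γ ∈ U, cc γ ^ 2) := by
  set m : ℝ := Ex p U f with hm
  have hLabs : ∀ γ ∈ U, |(-L)| * cc γ ≤ 1 := by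
    intro γ hγ
    rw [abs_neg, abs_of_nonneg hL0]
    exact hL1 γ hγ
  have hmgf := mgf_le hp0 hp1 U f cc hcc hlip (-L) hLabs
  have key : ∀ S ∈ U.powerset,
      (if f S ≤ m - t then p ^ S.card * (1 - p) ^ (U.card - S.card) else 0)
      ≤ Real.exp (-(L * t)) *
        (p ^ S.card * (1 - p) ^ (U.card - S.card) * Real.exp ((-L) * (f S - m))) := by
    intro S hS
    by_cases h : f S ≤ m - t
    · rw [if_pos h]
      have e : Real.exp (-(L * t)) *
          (p ^ S.card * (1 - p) ^ (U.card - S.card) * Real.exp ((-L) * (f S - m)))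
          = p ^ S.card * (1 - p) ^ (U.card - S.card) * Real.exp ((-L) * (f S - m + t)) := by
        rw [mul_add, Real.exp_add]
        ring_nf
      rw [e]
      have h1 : (0:ℝ) ≤ (-L) * (f S - m + t) := by
        have : f S - m + t ≤ 0 := by linarith
        nlinarith
      have h2 : (1:ℝ) ≤ Real.exp ((-L) * (f S - m + t)) := Real.one_le_exp h1
      calc p ^ S.card * (1 - p) ^ (U.card - S.card)
          = p ^ S.card * (1 - p) ^ (U.card - S.card) * 1 := by ring
        _ ≤ p ^ S.card * (1 - p) ^ (U.card - S.card) * Real.exp ((-L) * (f S - m + t)) :=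
            mul_le_mul_of_nonneg_left h2 (w_nonneg hp0 hp1 _ _)
    · rw [if_neg h]
      exact mul_nonneg (Real.exp_nonneg _)
        (mul_nonneg (w_nonneg hp0 hp1 _ _) (Real.exp_nonneg _))
  calc ∑ S ∈ U.powerset, (if f S ≤ m - t then p ^ S.card * (1 - p) ^ (U.card - S.card) else 0)
      ≤ ∑ S ∈ U.powerset, Real.exp (-(L * t)) *
        (p ^ S.card * (1 - p) ^ (U.card - S.card) * Real.exp ((-L) * (f S - m))) :=
        Finset.sum_le_sum key
    _ = Real.exp (-(L * t)) * Ex p U (fun S => Real.exp ((-L) * (f S - m))) := by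
        rw [Ex, Finset.mul_sum]
    _ ≤ Real.exp (-(L * t)) * Real.exp ((-L) ^ 2 * ∑ γ ∈ U, cc γ ^ 2) :=
        mul_le_mul_of_nonneg_left hmgf (Real.exp_nonneg _)
    _ = Real.exp (-(L * t) + L ^ 2 * ∑ γ ∈ U, cc γ ^ 2) := by
        rw [← Real.exp_add, neg_sq]


lemma pair_tail {α β C : Type*} [Fintype α] [Fintype β] [Fintype C] [DecidableEq C]
    (adj : α → β → Prop) [∀ a b, Decidable (adj a b)] (c : α → β → Finset C)
    {p d ε μ : ℝ} {Δ n : ℕ}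
    (hΔ : 1 ≤ Δ) (hp0 : 0 < p) (hp1 : p ≤ 1)
    (hε0 : 0 < ε) (hε1 : ε ≤ 1) (hμ0 : 0 < μ)
    (hμa : μ ≤ (ε ^ 10 / (2 * Δ)) ^ 10) (hμb : μ ≤ ε ^ 10 / (6 * Δ))
    (hn1 : (1:ℝ) ≤ (n:ℝ))
    (hα1 : ε * n ≤ (Fintype.card α : ℝ)) (hα2 : (Fintype.card α : ℝ) ≤ 2 * n)
    (hβ1 : ε * n ≤ (Fintype.card β : ℝ)) (hβ2 : (Fintype.card β : ℝ) ≤ 2 * n)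
    (hreg : ∀ (S : Finset α) (T : Finset β),
      ε * Fintype.card α ≤ S.card → ε * Fintype.card β ≤ T.card →
      d - ε ≤ (((S ×ˢ T).filter fun q => adj q.1 q.2).card : ℝ) / (S.card * T.card))
    (hcard : ∀ a b, adj a b → (c a b).card = Δ)
    (hbound : ∀ γ : C, (((Finset.univ : Finset (α × β)).filter
        fun q => adj q.1 q.2 ∧ γ ∈ c q.1 q.2).card : ℝ) ≤ μ * n)
    (S' : Finset α) (T : Finset β)
    (hs1 : 2 * ε * Fintype.card α ≤ (S'.card : ℝ))
    (hs2 : 2 * ε * Fintype.card β ≤ (T.card : ℝ)) :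
    ∑ S : Finset C,
      (if ¬ (p ^ Δ * d - 2 * ε ≤
          (((S' ×ˢ T).filter fun e => adj e.1 e.2 ∧ c e.1 e.2 ⊆ S).card : ℝ) /
            (S'.card * T.card))
        then p ^ S.card * (1 - p) ^ (Fintype.card C - S.card) else 0)
      ≤ Real.exp (-((Real.rpow μ (-0.9) + 3) * n)) := by
  classical
  have hΔR : (1:ℝ) ≤ (Δ:ℝ) := by exact_mod_cast hΔ
  have hΔ0 : (0:ℝ) < (Δ:ℝ) := by linarith
  have ha0 : (0:ℝ) < ε ^ 10 / (2 * Δ) := div_pos (pow_pos hε0 10) (by linarith)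
  have hn0 : (0:ℝ) < (n:ℝ) := by linarith
  have hAα : (0:ℝ) < Fintype.card α := lt_of_lt_of_le (mul_pos hε0 hn0) hα1
  have hAβ : (0:ℝ) < Fintype.card β := lt_of_lt_of_le (mul_pos hε0 hn0) hβ1
  have hpΔ0 : (0:ℝ) ≤ p ^ Δ := pow_nonneg hp0.le Δ
  have hpΔ1 : p ^ Δ ≤ 1 := pow_le_one₀ hp0.le hp1
  have hKey : Real.rpow μ (-0.9) + 3 ≤ ε ^ 10 / (Δ * μ) := by
    have hr1 : μ ^ ((-0.9):ℝ) = μ ^ ((0.1):ℝ) / μ := by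
      rw [show ((-0.9):ℝ) = 0.1 - 1 by norm_num, Real.rpow_sub hμ0, Real.rpow_one]
    have hr2 : μ ^ ((0.1):ℝ) ≤ ε ^ 10 / (2*Δ) := by
      have h1 : μ ^ ((0.1):ℝ) ≤ ((ε ^ 10 / (2 * Δ)) ^ 10) ^ ((0.1):ℝ) :=
        Real.rpow_le_rpow hμ0.le hμa (by norm_num)
      have h2 : ((ε ^ 10 / (2 * Δ)) ^ 10) ^ ((0.1):ℝ) = ε ^ 10 / (2*Δ) := by
        rw [← Real.rpow_natCast (ε ^ 10 / (2 * Δ)) 10, ← Real.rpow_mul ha0.le]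
        norm_num
      rw [h2] at h1; exact h1
    have hr3 : μ ^ ((-0.9):ℝ) ≤ (ε ^ 10 / (2*Δ)) / μ := by
      rw [hr1]
      exact div_le_div_of_nonneg_right hr2 hμ0.le
    have hr4 : (3:ℝ) ≤ (ε ^ 10 / (2*Δ)) / μ := by
      rw [div_div, le_div_iff₀ (by positivity : (0:ℝ) < 2*(Δ:ℝ)*μ)]
      have h6 := (le_div_iff₀ (by positivity : (0:ℝ) < 6*(Δ:ℝ))).1 hμb
      linarith
    have hr5 : (ε ^ 10 / (2*Δ)) / μ + (ε ^ 10 / (2*Δ)) / μ = ε ^ 10/(Δ*μ) := by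
      field_simp
      ring
    have key' : μ ^ ((-0.9):ℝ) + 3 ≤ ε ^ 10 / (Δ * μ) := by linarith
    exact key'
  clear hμa hμb
  set cc : C → ℝ := fun γ => (((Finset.univ : Finset (α × β)).filter
      fun q => adj q.1 q.2 ∧ γ ∈ c q.1 q.2).card : ℝ) with hccdef
  set L : ℝ := ε ^ 5 / (2 * Δ * μ * n) with hLdef
  have hL0 : 0 ≤ L := by
    apply div_nonneg (by positivity)
    have := mul_pos (mul_pos (mul_pos (by norm_num : (0:ℝ) < 2) hΔ0) hμ0) hn0
    linarith
  set A : ℝ := (S'.card : ℝ) with hAdef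
  set B : ℝ := (T.card : ℝ) with hBdef
  have hA0 : 0 < A := lt_of_lt_of_le (mul_pos (mul_pos two_pos hε0) hAα) hs1
  have hB0 : 0 < B := lt_of_lt_of_le (mul_pos (mul_pos two_pos hε0) hAβ) hs2
  have hAB : 0 < A * B := mul_pos hA0 hB0
  have hAn : 2*ε*(ε*n) ≤ A := by
    have h := mul_le_mul_of_nonneg_left hα1 (by linarith : (0:ℝ) ≤ 2*ε)
    calc 2*ε*(ε*n) = 2*ε*(ε*n) := rfl
      _ ≤ 2*ε*(Fintype.card α : ℝ) := by rw [mul_assoc] at h ⊢; exact h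
      _ ≤ A := hs1
  have hBn : 2*ε*(ε*n) ≤ B := by
    have h := mul_le_mul_of_nonneg_left hβ1 (by linarith : (0:ℝ) ≤ 2*ε)
    calc 2*ε*(ε*n) = 2*ε*(ε*n) := rfl
      _ ≤ 2*ε*(Fintype.card β : ℝ) := by rw [mul_assoc] at h ⊢; exact h
      _ ≤ B := hs2
  set P : Finset (α × β) := (S' ×ˢ T).filter (fun e => adj e.1 e.2) with hPdef
  set f : Finset C → ℝ := fun S =>
    (((S' ×ˢ T).filter fun e => adj e.1 e.2 ∧ c e.1 e.2 ⊆ S).card : ℝ) with hfdef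
  have hf_sum : ∀ S : Finset C, f S = ∑ e ∈ P, (if c e.1 e.2 ⊆ S then (1:ℝ) else 0) := by
    intro S
    have h1 : ∑ e ∈ P, (if c e.1 e.2 ⊆ S then (1:ℝ) else 0)
        = ((P.filter fun e => c e.1 e.2 ⊆ S).card : ℝ) := by
      rw [Finset.card_filter]
      push_cast
      rfl
    rw [h1, hPdef, Finset.filter_filter]
  have hm : Ex p Finset.univ f = p ^ Δ * (P.card : ℝ) := by
    have h1 : Ex p Finset.univ f
        = Ex p Finset.univ (fun S => ∑ e ∈ P, (if c e.1 e.2 ⊆ S then (1:ℝ) else 0)) :=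
      Ex_congr (fun S _ => hf_sum S)
    rw [h1, Ex_sum]
    have h2 : ∀ e ∈ P, Ex p Finset.univ (fun S => if c e.1 e.2 ⊆ S then (1:ℝ) else 0)
        = p ^ Δ := by
      intro e he
      rw [Ex_indicator (Finset.subset_univ _), hcard e.1 e.2 (Finset.mem_filter.1 he).2]
    rw [Finset.sum_congr rfl h2, Finset.sum_const, nsmul_eq_mul]
    ring
  have hreg' := hreg S' T
    (le_trans (by
      have := mul_le_mul_of_nonneg_right (by linarith : ε ≤ 2*ε)
        (Nat.cast_nonneg (Fintype.card α) : (0:ℝ) ≤ Fintype.card α)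
      linarith) hs1)
    (le_trans (by
      have := mul_le_mul_of_nonneg_right (by linarith : ε ≤ 2*ε)
        (Nat.cast_nonneg (Fintype.card β) : (0:ℝ) ≤ Fintype.card β)
      linarith) hs2)
  have hP : (d - ε) * (A * B) ≤ (P.card : ℝ) := by
    rw [← le_div_iff₀ hAB]
    exact hreg'
  have hmlb : p ^ Δ * ((d - ε) * (A * B)) ≤ Ex p Finset.univ f := by
    rw [hm]; exact mul_le_mul_of_nonneg_left hP hpΔ0
  have himp : ∀ S : Finset C,
      ¬ (p ^ Δ * d - 2 * ε ≤ f S / (A * B)) → f S ≤ Ex p Finset.univ f - ε * (A * B) := by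
    intro S h
    have h1 : f S < (p ^ Δ * d - 2 * ε) * (A * B) := by
      have h2 := not_le.1 h
      calc f S = f S / (A*B) * (A*B) := by field_simp
        _ < (p ^ Δ * d - 2 * ε) * (A * B) := mul_lt_mul_of_pos_right h2 hAB
    have h3 : p ^ Δ * ε * (A*B) ≤ ε * (A*B) := by
      have h4 : p ^ Δ * ε ≤ 1 * ε := mul_le_mul_of_nonneg_right hpΔ1 hε0.le
      have h5 := mul_le_mul_of_nonneg_right h4 hAB.le
      rw [one_mul] at h5
      exact h5
    linarith only [h1, h3, hmlb]
  have hcc0 : ∀ γ ∈ (Finset.univ : Finset C), 0 ≤ cc γ := fun γ _ => Nat.cast_nonneg _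
  have hlip : ∀ γ ∈ (Finset.univ : Finset C), ∀ S ⊆ Finset.univ, γ ∉ S →
      |f (insert γ S) - f S| ≤ cc γ := by
    intro γ _ S _ _
    have hdiff : f (insert γ S) - f S
        = ∑ e ∈ P, ((if c e.1 e.2 ⊆ insert γ S then (1:ℝ) else 0)
            - (if c e.1 e.2 ⊆ S then (1:ℝ) else 0)) := by
      rw [hf_sum, hf_sum, Finset.sum_sub_distrib]
    have hterm0 : ∀ e ∈ P, 0 ≤ (if c e.1 e.2 ⊆ insert γ S then (1:ℝ) else 0)
        - (if c e.1 e.2 ⊆ S then (1:ℝ) else 0) := by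
      intro e _
      by_cases h1 : c e.1 e.2 ⊆ S
      · have h2 : c e.1 e.2 ⊆ insert γ S := h1.trans (Finset.subset_insert _ _)
        simp [h1, h2]
      · by_cases h2 : c e.1 e.2 ⊆ insert γ S <;> simp [h1, h2]
    have hterm1 : ∀ e ∈ P, (if c e.1 e.2 ⊆ insert γ S then (1:ℝ) else 0)
        - (if c e.1 e.2 ⊆ S then (1:ℝ) else 0)
        ≤ (if adj e.1 e.2 ∧ γ ∈ c e.1 e.2 then (1:ℝ) else 0) := by
      intro e he
      have hadj : adj e.1 e.2 := (Finset.mem_filter.1 he).2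
      by_cases h1 : c e.1 e.2 ⊆ S
      · have h2 : c e.1 e.2 ⊆ insert γ S := h1.trans (Finset.subset_insert _ _)
        rw [if_pos h2, if_pos h1]
        split <;> norm_num
      · by_cases h2 : c e.1 e.2 ⊆ insert γ S
        · obtain ⟨x, hxce, hxS⟩ := Finset.not_subset.1 h1
          have hxγ : x = γ := by
            rcases Finset.mem_insert.1 (h2 hxce) with h | h
            · exact h
            · exact absurd h hxS
          rw [if_pos h2, if_neg h1, if_pos ⟨hadj, hxγ ▸ hxce⟩]
          norm_num
        · rw [if_neg h2, if_neg h1]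
          split <;> norm_num
    have hsum1 : f (insert γ S) - f S
        ≤ ∑ e ∈ P, (if adj e.1 e.2 ∧ γ ∈ c e.1 e.2 then (1:ℝ) else 0) := by
      rw [hdiff]; exact Finset.sum_le_sum hterm1
    have hsum2 : ∑ e ∈ P, (if adj e.1 e.2 ∧ γ ∈ c e.1 e.2 then (1:ℝ) else 0) ≤ cc γ := by
      rw [hccdef]
      dsimp only
      rw [Finset.card_filter]
      push_cast
      refine Finset.sum_le_sum_of_subset_of_nonneg (Finset.subset_univ P) ?_
      intro e _ _
      split <;> norm_num
    have h0 : 0 ≤ f (insert γ S) - f S := by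
      rw [hdiff]; exact Finset.sum_nonneg hterm0
    rw [abs_of_nonneg h0]
    exact le_trans hsum1 hsum2
  have hL1 : ∀ γ ∈ (Finset.univ : Finset C), L * cc γ ≤ 1 := by
    intro γ _
    have h1 : L * cc γ ≤ L * (μ * n) :=
      mul_le_mul_of_nonneg_left (hbound γ) hL0
    have h2 : L * (μ * n) = ε ^ 5 / (2 * Δ) := by
      rw [hLdef]
      field_simp
    rw [h2] at h1
    have h3 : ε ^ 5 ≤ 1 := pow_le_one₀ hε0.le hε1
    have h4 : ε ^ 5 / (2 * Δ) ≤ 1 := by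
      rw [div_le_one (by linarith)]
      linarith
    linarith
  have htail := tail hp0.le hp1 (Finset.univ : Finset C) f cc hcc0 hlip (t := ε * (A * B)) hL0 hL1
  rw [Finset.powerset_univ] at htail
  simp only [Finset.card_univ] at htail
  have hstep : ∑ S : Finset C,
      (if ¬ (p ^ Δ * d - 2 * ε ≤ f S / (A * B))
        then p ^ S.card * (1 - p) ^ (Fintype.card C - S.card) else 0)
      ≤ ∑ S : Finset C, (if f S ≤ Ex p Finset.univ f - ε * (A * B)
          then p ^ S.card * (1 - p) ^ (Fintype.card C - S.card) else 0) := by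
    refine Finset.sum_le_sum fun S _ => ?_
    by_cases h1 : p ^ Δ * d - 2 * ε ≤ f S / (A * B)
    · rw [if_neg (not_not_intro h1)]
      split
      · exact w_nonneg hp0.le hp1 _ _
      · exact le_refl 0
    · rw [if_pos h1, if_pos (himp S h1)]
  have hccsum : ∑ γ : C, cc γ ≤ Δ * ((Fintype.card α : ℝ) * (Fintype.card β : ℝ)) := by
    have h1 : ∀ γ : C, cc γ
        = ∑ e : α × β, (if adj e.1 e.2 ∧ γ ∈ c e.1 e.2 then (1:ℝ) else 0) := by
      intro γ
      rw [hccdef]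
      dsimp only
      rw [Finset.card_filter]
      push_cast
      rfl
    calc ∑ γ : C, cc γ
        = ∑ γ : C, ∑ e : α × β, (if adj e.1 e.2 ∧ γ ∈ c e.1 e.2 then (1:ℝ) else 0) :=
          Finset.sum_congr rfl fun γ _ => h1 γ
      _ = ∑ e : α × β, ∑ γ : C, (if adj e.1 e.2 ∧ γ ∈ c e.1 e.2 then (1:ℝ) else 0) :=
          Finset.sum_comm
      _ ≤ ∑ _e : α × β, (Δ:ℝ) := by
          refine Finset.sum_le_sum fun e _ => ?_
          by_cases hadj : adj e.1 e.2
          · have h2 : ∀ γ : C, (if adj e.1 e.2 ∧ γ ∈ c e.1 e.2 then (1:ℝ) else 0)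
                = (if γ ∈ c e.1 e.2 then (1:ℝ) else 0) := by
              intro γ; by_cases hγ : γ ∈ c e.1 e.2 <;> simp [hadj, hγ]
            rw [Finset.sum_congr rfl fun γ _ => h2 γ]
            rw [Finset.sum_ite_mem, Finset.univ_inter, Finset.sum_const, nsmul_eq_mul,
              mul_one, hcard e.1 e.2 hadj]
          · simp only [hadj, false_and, if_false, Finset.sum_const_zero]
            positivity
      _ = (Fintype.card (α × β) : ℝ) * (Δ:ℝ) := by
          rw [Finset.sum_const, Finset.card_univ, nsmul_eq_mul]
      _ = Δ * ((Fintype.card α : ℝ) * (Fintype.card β : ℝ)) := by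
          rw [Fintype.card_prod]
          push_cast
          ring
  have hV : ∑ γ : C, cc γ ^ 2 ≤ 4 * Δ * μ * n ^ 3 := by
    have h1 : ∑ γ : C, cc γ ^ 2 ≤ ∑ γ : C, (μ * n) * cc γ := by
      refine Finset.sum_le_sum fun γ _ => ?_
      have hb := hbound γ
      have h0 : (0:ℝ) ≤ cc γ := Nat.cast_nonneg _
      have h2 := mul_le_mul_of_nonneg_right hb h0
      rw [sq]
      exact h2
    rw [← Finset.mul_sum] at h1
    have hμn : (0:ℝ) ≤ μ * n := mul_nonneg hμ0.le hn0.le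
    have h3 : (Δ:ℝ) * ((Fintype.card α : ℝ) * (Fintype.card β : ℝ))
        ≤ Δ * (2*n * (2*n)) := by
      refine mul_le_mul_of_nonneg_left ?_ hΔ0.le
      have h5 : (0:ℝ) ≤ Fintype.card β := Nat.cast_nonneg _
      exact mul_le_mul hα2 hβ2 h5 (by linarith)
    calc ∑ γ : C, cc γ ^ 2 ≤ (μ*n) * ∑ γ : C, cc γ := h1
      _ ≤ (μ*n) * (Δ * ((Fintype.card α : ℝ) * (Fintype.card β : ℝ))) :=
          mul_le_mul_of_nonneg_left hccsum hμn
      _ ≤ (μ*n) * (Δ * (2*n*(2*n))) := mul_le_mul_of_nonneg_left h3 hμn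
      _ = 4 * Δ * μ * n^3 := by ring
  have ht' : 4 * ε^5 * n^2 ≤ ε * (A * B) := by
    have h1 := mul_le_mul hAn hBn (by positivity) hA0.le
    have h2 := mul_le_mul_of_nonneg_left h1 hε0.le
    calc 4*ε^5*n^2 = ε*((2*ε*(ε*n))*(2*ε*(ε*n))) := by ring
      _ ≤ ε*(A*B) := h2
  have hexp1 : -(L*(ε * (A * B))) + L^2 * ∑ γ : C, cc γ^2
      ≤ -(L*(4*ε^5*n^2)) + L^2 * (4*Δ*μ*n^3) := by
    have ha := mul_le_mul_of_nonneg_left ht' hL0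
    have hb := mul_le_mul_of_nonneg_left hV (sq_nonneg L)
    linarith only [ha, hb]
  have hexp2 : -(L*(4*ε^5*n^2)) + L^2 * (4*Δ*μ*n^3) = -((ε^10/(Δ*μ)) * n) := by
    rw [hLdef]
    field_simp
    ring
  have hexp3 : -((ε^10/(Δ*μ)) * n) ≤ -((Real.rpow μ (-0.9) + 3) * n) := by
    have h7 := mul_le_mul_of_nonneg_right hKey hn0.le
    linarith
  calc ∑ S : Finset C,
      (if ¬ (p ^ Δ * d - 2 * ε ≤ f S / (A * B))
        then p ^ S.card * (1 - p) ^ (Fintype.card C - S.card) else 0)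
      ≤ ∑ S : Finset C, (if f S ≤ Ex p Finset.univ f - ε * (A * B)
          then p ^ S.card * (1 - p) ^ (Fintype.card C - S.card) else 0) := hstep
    _ ≤ Real.exp (-(L * (ε * (A * B))) + L ^ 2 * ∑ γ : C, cc γ ^ 2) := htail
    _ ≤ Real.exp (-((Real.rpow μ (-0.9) + 3) * n)) := by
        apply Real.exp_le_exp.2
        calc -(L * (ε * (A * B))) + L ^ 2 * ∑ γ : C, cc γ ^ 2
            ≤ -(L*(4*ε^5*n^2)) + L^2 * (4*Δ*μ*n^3) := hexp1
          _ = -((ε^10/(Δ*μ)) * n) := hexp2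
          _ ≤ -((Real.rpow μ (-0.9) + 3) * n) := hexp3


lemma split_sum {ι : Type*} [Fintype ι] (P : ι → Prop) [DecidablePred P] (w : ι → ℝ) :
    ∑ i : ι, (if P i then w i else 0)
      = (∑ i : ι, w i) - ∑ i : ι, (if ¬ P i then w i else 0) := by
  rw [eq_sub_iff_add_eq, ← Finset.sum_add_distrib]
  refine Finset.sum_congr rfl fun i _ => ?_
  by_cases h : P i <;> simp [h]

end Stmt8Aux


open Stmt8Aux

/-- Proposition `prop:regularity slicing`.
Let `1/n ≪ μ ≪ ε ≪ p, d, 1/Δ`. If `G` is a lower (ε,d)-regular bipartite graph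
between `V`,`V'` with `εn ≤ |V|,|V'| ≤ 2n` and `c` is a `μn`-bounded edge set
colouring by `Δ`-sets, then activating each colour independently with probability
`p`, the activated subgraph `G_{C'}` is lower `(2ε, p^Δ d)`-regular with probability
at least `1 − e^{−μ^{−0.9} n}`. -/
theorem stmt8 :
    ∀ (Δ : ℕ), 1 ≤ Δ → ∀ p d : ℝ, 0 < p → p ≤ 1 → 0 < d → d ≤ 1 →
    ∃ ε₀ > (0 : ℝ), ∀ ε : ℝ, 0 < ε → ε ≤ ε₀ →
    ∃ μ₀ > (0 : ℝ), ∀ μ : ℝ, 0 < μ → μ ≤ μ₀ →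
    ∃ n₀ : ℕ, ∀ n : ℕ, n₀ ≤ n →
    ∀ (α β C : Type) [Fintype α] [Fintype β] [Fintype C] [DecidableEq C]
      (adj : α → β → Prop) [∀ a b, Decidable (adj a b)]
      (c : α → β → Finset C),
    -- εn ≤ |V|, |V'| ≤ 2n
    ε * n ≤ (Fintype.card α : ℝ) → (Fintype.card α : ℝ) ≤ 2 * n →
    ε * n ≤ (Fintype.card β : ℝ) → (Fintype.card β : ℝ) ≤ 2 * n →
    -- G is lower (ε,d)-regular
    (∀ (S : Finset α) (T : Finset β),
      ε * Fintype.card α ≤ S.card → ε * Fintype.card β ≤ T.card →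
      d - ε ≤ (((S ×ˢ T).filter fun q => adj q.1 q.2).card : ℝ) / (S.card * T.card)) →
    -- c is an edge set colouring into Δ-sets which is μn-bounded
    (∀ a b, adj a b → (c a b).card = Δ) →
    (∀ γ : C, (((Finset.univ : Finset (α × β)).filter
        fun q => adj q.1 q.2 ∧ γ ∈ c q.1 q.2).card : ℝ) ≤ μ * n) →
    -- with probability ≥ 1 - e^{-μ^{-0.9} n}, G_{C'} is lower (2ε, p^Δ d)-regular
    1 - Real.exp (-(Real.rpow μ (-0.9) * n)) ≤
      ∑ S : Finset C,
        (if (∀ (S' : Finset α) (T : Finset β),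
              2 * ε * Fintype.card α ≤ S'.card → 2 * ε * Fintype.card β ≤ T.card →
              p ^ Δ * d - 2 * ε ≤
                (((S' ×ˢ T).filter fun q => adj q.1 q.2 ∧ c q.1 q.2 ⊆ S).card : ℝ) /
                  (S'.card * T.card))
          then p ^ S.card * (1 - p) ^ (Fintype.card C - S.card) else 0) := by
  classical
  intro Δ hΔ p d hp0 hp1 hd0 hd1
  refine ⟨1, one_pos, ?_⟩
  intro ε hε0 hε1
  have hΔR : (1:ℝ) ≤ (Δ:ℝ) := by exact_mod_cast hΔ
  have hΔ0 : (0:ℝ) < (Δ:ℝ) := by linarith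
  have ha0 : (0:ℝ) < ε ^ 10 / (2 * Δ) := div_pos (pow_pos hε0 10) (by linarith)
  have hb0 : (0:ℝ) < ε ^ 10 / (6 * Δ) := div_pos (pow_pos hε0 10) (by linarith)
  refine ⟨min ((ε ^ 10 / (2 * Δ)) ^ 10) (ε ^ 10 / (6 * Δ)),
    lt_min (pow_pos ha0 10) hb0, ?_⟩
  intro μ hμ0 hμ1
  refine ⟨1, ?_⟩
  intro n hn α β C _ _ _ _ adj _ c hα1 hα2 hβ1 hβ2 hreg hcard hbound
  have hμa : μ ≤ (ε ^ 10 / (2 * Δ)) ^ 10 := le_trans hμ1 (min_le_left _ _)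
  have hμb : μ ≤ ε ^ 10 / (6 * Δ) := le_trans hμ1 (min_le_right _ _)
  have hn1 : (1:ℝ) ≤ (n:ℝ) := by exact_mod_cast hn
  have hn0 : (0:ℝ) < (n:ℝ) := by linarith
  have hwsum : ∑ S : Finset C, (p ^ S.card * (1 - p) ^ (Fintype.card C - S.card)) = 1 := by
    have h := Ex_const p (Finset.univ : Finset C) 1
    unfold Ex at h
    rw [Finset.powerset_univ] at h
    simpa [Finset.card_univ] using h
  rw [split_sum, hwsum, sub_le_sub_iff_left]
  set pairs : Finset (Finset α × Finset β) :=
    (Finset.univ : Finset α).powerset ×ˢ (Finset.univ : Finset β).powerset with hpairsdef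
  set ind : (Finset α × Finset β) → Finset C → ℝ := fun q S =>
    if (2 * ε * Fintype.card α ≤ ((q.1.card : ℕ) : ℝ)
          ∧ 2 * ε * Fintype.card β ≤ ((q.2.card : ℕ) : ℝ))
        ∧ ¬ (p ^ Δ * d - 2 * ε ≤
          (((q.1 ×ˢ q.2).filter fun e => adj e.1 e.2 ∧ c e.1 e.2 ⊆ S).card : ℝ) /
            (q.1.card * q.2.card))
    then p ^ S.card * (1 - p) ^ (Fintype.card C - S.card) else 0 with hinddef
  have hind_nonneg : ∀ q S, 0 ≤ ind q S := by
    intro q S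
    simp only [hinddef]
    split
    · exact w_nonneg hp0.le hp1 _ _
    · exact le_refl 0
  have stepC : ∀ q ∈ pairs, ∑ S : Finset C, ind q S
      ≤ Real.exp (-((Real.rpow μ (-0.9) + 3) * n)) := by
    intro q _
    by_cases hsz : 2 * ε * Fintype.card α ≤ ((q.1.card : ℕ) : ℝ)
        ∧ 2 * ε * Fintype.card β ≤ ((q.2.card : ℕ) : ℝ)
    swap
    · have hz : ∀ S : Finset C, ind q S = 0 := by
        intro S
        simp only [hinddef]
        exact if_neg (fun h => hsz h.1)
      simp only [hz, Finset.sum_const_zero]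
      exact Real.exp_nonneg _
    obtain ⟨hs1, hs2⟩ := hsz
    have hpoint : ∀ S : Finset C, ind q S
        ≤ (if ¬ (p ^ Δ * d - 2 * ε ≤
            (((q.1 ×ˢ q.2).filter fun e => adj e.1 e.2 ∧ c e.1 e.2 ⊆ S).card : ℝ) /
              (q.1.card * q.2.card))
          then p ^ S.card * (1 - p) ^ (Fintype.card C - S.card) else 0) := by
      intro S
      simp only [hinddef]
      by_cases h2 : p ^ Δ * d - 2 * ε ≤
          (((q.1 ×ˢ q.2).filter fun e => adj e.1 e.2 ∧ c e.1 e.2 ⊆ S).card : ℝ) /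
            (q.1.card * q.2.card)
      · rw [if_neg (fun h => h.2 h2), if_neg (not_not_intro h2)]
      · rw [if_pos ⟨⟨hs1, hs2⟩, h2⟩, if_pos h2]
    calc ∑ S : Finset C, ind q S
        ≤ ∑ S : Finset C, (if ¬ (p ^ Δ * d - 2 * ε ≤
            (((q.1 ×ˢ q.2).filter fun e => adj e.1 e.2 ∧ c e.1 e.2 ⊆ S).card : ℝ) /
              (q.1.card * q.2.card))
          then p ^ S.card * (1 - p) ^ (Fintype.card C - S.card) else 0) :=
          Finset.sum_le_sum fun S _ => hpoint S
      _ ≤ Real.exp (-((Real.rpow μ (-0.9) + 3) * n)) :=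
          pair_tail adj c hΔ hp0 hp1 hε0 hε1 hμ0 hμa hμb hn1 hα1 hα2 hβ1 hβ2
            hreg hcard hbound q.1 q.2 hs1 hs2
  have stepA : ∀ S : Finset C,
      (if ¬ (∀ (S' : Finset α) (T : Finset β),
              2 * ε * Fintype.card α ≤ S'.card → 2 * ε * Fintype.card β ≤ T.card →
              p ^ Δ * d - 2 * ε ≤
                (((S' ×ˢ T).filter fun e => adj e.1 e.2 ∧ c e.1 e.2 ⊆ S).card : ℝ) /
                  (S'.card * T.card))
        then p ^ S.card * (1 - p) ^ (Fintype.card C - S.card) else 0)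
      ≤ ∑ q ∈ pairs, ind q S := by
    intro S
    split_ifs with hgS
    · exact Finset.sum_nonneg fun q _ => hind_nonneg q S
    · push_neg at hgS
      obtain ⟨S', T, h1, h2, h3⟩ := hgS
      have hmem : (S', T) ∈ pairs := by
        rw [hpairsdef]
        exact Finset.mem_product.2
          ⟨Finset.mem_powerset.2 (Finset.subset_univ _),
           Finset.mem_powerset.2 (Finset.subset_univ _)⟩
      refine le_trans ?_ (Finset.single_le_sum (fun q _ => hind_nonneg q S) hmem)
      simp only [hinddef]
      rw [if_pos ⟨⟨h1, h2⟩, not_le.2 h3⟩]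
  have hpairs : ((pairs.card : ℕ) : ℝ) ≤ Real.exp (3 * n) := by
    have hcαn : Fintype.card α ≤ 2 * n := by
      have h1 : (Fintype.card α : ℝ) ≤ ((2*n : ℕ) : ℝ) := by push_cast; linarith
      exact_mod_cast h1
    have hcβn : Fintype.card β ≤ 2 * n := by
      have h1 : (Fintype.card β : ℝ) ≤ ((2*n : ℕ) : ℝ) := by push_cast; linarith
      exact_mod_cast h1
    have h1 : pairs.card = 2 ^ (Fintype.card α) * 2 ^ (Fintype.card β) := by
      rw [hpairsdef, Finset.card_product, Finset.card_powerset, Finset.card_powerset,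
        Finset.card_univ, Finset.card_univ]
    have h2 : pairs.card ≤ 2 ^ (4 * n) := by
      rw [h1, ← pow_add]
      exact Nat.pow_le_pow_right (by norm_num) (by omega)
    have h3 : ((pairs.card : ℕ) : ℝ) ≤ (2:ℝ) ^ (4 * n) := by
      calc ((pairs.card : ℕ) : ℝ) ≤ ((2 ^ (4*n) : ℕ) : ℝ) := by exact_mod_cast h2
        _ = (2:ℝ) ^ (4*n) := by push_cast; rfl
    have h4 : (2:ℝ) ^ (4*n) = Real.exp (((4*n : ℕ) : ℝ) * Real.log 2) := by
      rw [Real.exp_nat_mul, Real.exp_log (by norm_num : (0:ℝ) < 2)]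
    have h5 : ((4*n : ℕ) : ℝ) * Real.log 2 ≤ 3 * n := by
      have hlog := Real.log_two_lt_d9
      have hlog0 := Real.log_nonneg (by norm_num : (1:ℝ) ≤ 2)
      push_cast
      nlinarith
    calc ((pairs.card : ℕ) : ℝ) ≤ (2:ℝ) ^ (4*n) := h3
      _ = Real.exp (((4*n : ℕ) : ℝ) * Real.log 2) := h4
      _ ≤ Real.exp (3 * n) := Real.exp_le_exp.2 h5
  calc ∑ S : Finset C,
      (if ¬ (∀ (S' : Finset α) (T : Finset β),
              2 * ε * Fintype.card α ≤ S'.card → 2 * ε * Fintype.card β ≤ T.card →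
              p ^ Δ * d - 2 * ε ≤
                (((S' ×ˢ T).filter fun e => adj e.1 e.2 ∧ c e.1 e.2 ⊆ S).card : ℝ) /
                  (S'.card * T.card))
        then p ^ S.card * (1 - p) ^ (Fintype.card C - S.card) else 0)
      ≤ ∑ S : Finset C, ∑ q ∈ pairs, ind q S := Finset.sum_le_sum fun S _ => stepA S
    _ = ∑ q ∈ pairs, ∑ S : Finset C, ind q S := Finset.sum_comm
    _ ≤ ∑ _q ∈ pairs, Real.exp (-((Real.rpow μ (-0.9) + 3) * n)) :=
        Finset.sum_le_sum stepC
    _ = (pairs.card : ℝ) * Real.exp (-((Real.rpow μ (-0.9) + 3) * n)) := by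
        rw [Finset.sum_const, nsmul_eq_mul]
    _ ≤ Real.exp (3 * n) * Real.exp (-((Real.rpow μ (-0.9) + 3) * n)) :=
        mul_le_mul_of_nonneg_right hpairs (Real.exp_nonneg _)
    _ = Real.exp (-(Real.rpow μ (-0.9) * n)) := by
        rw [← Real.exp_add]
        congr 1
        ring
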